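/- Let σ < 0 and 0 < δt < Δt ≤ ΔT. Then the parameters satisfy: 0 < β < 1, 0 < δβ < β, γ > 0, and δγ < 0. -/

import Mathlib

/-- `β_τ = (1 - σ τ)^(-ΔT/τ)` (real exponent). -/
noncomputable def betaF (σ ΔT τ : ℝ) : ℝ := (1 - σ * τ) ^ (-(ΔT / τ))

/-- `γ_τ = (β_τ² - 1)/(σ (2 - σ τ))`. -/
noncomputable def gammaF (σ ΔT τ : ℝ) : ℝ := ((betaF σ ΔT τ) ^ 2 - 1) / (σ * (2 - σ * τ))

lemma beta_pos' (σ ΔT τ : ℝ) (hσ : σ < 0) (hτ : 0 < τ) : 0 < betaF σ ΔT τ :=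
  Real.rpow_pos_of_pos (by nlinarith) _

lemma beta_lt_one' (σ ΔT τ : ℝ) (hσ : σ < 0) (hτ : 0 < τ) (hΔT : 0 < ΔT) :
    betaF σ ΔT τ < 1 :=
  Real.rpow_lt_one_of_one_lt_of_neg (by nlinarith)
    (by have := div_pos hΔT hτ; linarith)

lemma beta_mono' (σ ΔT s t : ℝ) (hσ : σ < 0) (hs : 0 < s) (hst : s < t) (hΔT : 0 < ΔT) :
    betaF σ ΔT s < betaF σ ΔT t := by
  have ht : 0 < t := hs.trans hst
  have hσt := mul_neg_of_neg_of_pos hσ ht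
  have hσs := mul_neg_of_neg_of_pos hσ hs
  have hbs : (1:ℝ) < 1 - σ * s := by linarith
  have hbt : (1:ℝ) < 1 - σ * t := by linarith
  -- key concavity inequality: s * log(1-σt) < t * log(1-σs)
  have key : s * Real.log (1 - σ * t) < t * Real.log (1 - σ * s) := by
    have hb : 0 < s / t := by positivity
    have ha : 0 < 1 - s / t := by
      have : s / t < 1 := (div_lt_one ht).mpr hst
      linarith
    have hmem1 : (1:ℝ) ∈ Set.Ioi (0:ℝ) := by norm_num
    have hmem2 : (1 - σ * t) ∈ Set.Ioi (0:ℝ) := by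
      simp only [Set.mem_Ioi]; linarith
    have hne : (1:ℝ) ≠ 1 - σ * t := by intro h; linarith [h.le]
    have h := strictConcaveOn_log_Ioi.2 hmem1 hmem2 hne ha hb (by ring)
    have htne : t ≠ 0 := ne_of_gt ht
    have harg : (1 - s / t) • (1:ℝ) + (s / t) • (1 - σ * t) = 1 - σ * s := by
      field_simp
      simp only [smul_eq_mul] at *; field_simp; ring
    rw [harg, Real.log_one, smul_eq_mul, smul_eq_mul] at h
    have h' : (s / t) * Real.log (1 - σ * t) < Real.log (1 - σ * s) := by linarith
    have h2 := mul_lt_mul_of_pos_left h' ht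
    calc s * Real.log (1 - σ * t) = t * ((s / t) * Real.log (1 - σ * t)) := by
          field_simp
      _ < t * Real.log (1 - σ * s) := h2
  rw [betaF, betaF, Real.rpow_def_of_pos (by linarith), Real.rpow_def_of_pos (by linarith)]
  apply Real.exp_lt_exp.mpr
  rw [mul_neg, mul_neg, neg_lt_neg_iff, mul_div_assoc', mul_div_assoc',
    div_lt_div_iff₀ ht hs]
  nlinarith [mul_lt_mul_of_pos_left key hΔT]

lemma frac_lt (a1 a2 e1 e2 : ℝ) (h1 : 0 ≤ a2) (h2 : a2 < a1) (h3 : 0 < e1) (h4 : e1 < e2) :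
    a2 * e1 < a1 * e2 := by nlinarith

theorem sign_of_parameters (σ δt Δt ΔT : ℝ) (hσ : σ < 0)
    (hδt : 0 < δt) (hδtΔt : δt < Δt) (hΔtΔT : Δt ≤ ΔT) :
    0 < betaF σ ΔT Δt ∧ betaF σ ΔT Δt < 1 ∧
    0 < betaF σ ΔT Δt - betaF σ ΔT δt ∧
    betaF σ ΔT Δt - betaF σ ΔT δt < betaF σ ΔT Δt ∧
    0 < gammaF σ ΔT Δt ∧
    gammaF σ ΔT Δt - gammaF σ ΔT δt < 0 := by
  have hΔt : 0 < Δt := hδt.trans hδtΔt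
  have hΔT : 0 < ΔT := lt_of_lt_of_le hΔt hΔtΔT
  have hσΔ := mul_neg_of_neg_of_pos hσ hΔt
  have hσδ := mul_neg_of_neg_of_pos hσ hδt
  have hb2pos := beta_pos' σ ΔT Δt hσ hΔt
  have hb1pos := beta_pos' σ ΔT δt hσ hδt
  have hb2lt := beta_lt_one' σ ΔT Δt hσ hΔt hΔT
  have hb1lt := beta_lt_one' σ ΔT δt hσ hδt hΔT
  have hmono := beta_mono' σ ΔT δt Δt hσ hδt hδtΔt hΔT
  have hd2 : 0 < -σ * (2 - σ * Δt) := mul_pos (by linarith) (by linarith)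
  have hd1 : 0 < -σ * (2 - σ * δt) := mul_pos (by linarith) (by linarith)
  have hσ2 : 0 < σ * σ := mul_pos_of_neg_of_neg hσ hσ
  refine ⟨hb2pos, hb2lt, by linarith, by linarith, ?_, ?_⟩
  · rw [gammaF]
    apply div_pos_of_neg_of_neg
    · nlinarith
    · linarith [mul_neg_of_neg_of_pos hσ (show (0:ℝ) < 2 - σ * Δt by linarith)]
  · have e2 : gammaF σ ΔT Δt = (1 - (betaF σ ΔT Δt) ^ 2) / (-σ * (2 - σ * Δt)) := by
      rw [gammaF, show -σ * (2 - σ * Δt) = -(σ * (2 - σ * Δt)) by ring,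
        show (1 - (betaF σ ΔT Δt) ^ 2) = -((betaF σ ΔT Δt) ^ 2 - 1) by ring,
        neg_div_neg_eq]
    have e1 : gammaF σ ΔT δt = (1 - (betaF σ ΔT δt) ^ 2) / (-σ * (2 - σ * δt)) := by
      rw [gammaF, show -σ * (2 - σ * δt) = -(σ * (2 - σ * δt)) by ring,
        show (1 - (betaF σ ΔT δt) ^ 2) = -((betaF σ ΔT δt) ^ 2 - 1) by ring,
        neg_div_neg_eq]
    rw [sub_neg, e1, e2, div_lt_div_iff₀ hd2 hd1]
    apply frac_lt
    · nlinarith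
    · nlinarith
    · exact hd1
    · nlinarith [mul_pos hσ2 (sub_pos.mpr hδtΔt)]
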